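/- Let X be a complete metric linear space and S ⊆ X a Borel set. If there is a finite-dimensional subspace V ⊆ X such that for every x ∈ X the set (S + x) ∩ V has V-Lebesgue measure zero, then S is shy. -/

import Mathlib

open MeasureTheory

/-- A Borel set `S` is *shy* if there is a compactly supported Borel probability
measure `μ` such that every translate of `S` has `μ`-measure zero. -/
def IsShyBorel {X : Type*} [AddGroup X] [TopologicalSpace X] [MeasurableSpace X]
    (S : Set X) : Prop :=
  MeasurableSet S ∧ ∃ μ : Measure X, IsProbabilityMeasure μ ∧
    (∃ K : Set X, IsCompact K ∧ μ Kᶜ = 0) ∧ ∀ x : X, μ ((· + x) '' S) = 0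

/-- A set is *shy* if it is contained in a shy Borel set. -/
def IsShy {X : Type*} [AddGroup X] [TopologicalSpace X] [MeasurableSpace X]
    (S : Set X) : Prop :=
  ∃ T, S ⊆ T ∧ IsShyBorel T

/-- A set is *prevalent* if its complement is shy. -/
def Prevalent {X : Type*} [AddGroup X] [TopologicalSpace X] [MeasurableSpace X]
    (S : Set X) : Prop :=
  IsShy Sᶜ

theorem probe_implies_shy {X : Type*} [AddCommGroup X] [Module ℝ X] [MetricSpace X] [CompleteSpace X]
    [IsTopologicalAddGroup X] [ContinuousSMul ℝ X] [MeasurableSpace X] [BorelSpace X]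
    (S : Set X) (hS : MeasurableSet S) (k : ℕ) (e : (Fin k → ℝ) →ₗ[ℝ] X)
    (he : Function.Injective e)
    (h : ∀ x : X, volume {c : Fin k → ℝ | e c ∈ (· + x) '' S} = 0) :
    IsShyBorel S := by
  refine ⟨hS, ?_⟩
  have hec : Continuous e := e.continuous_of_finiteDimensional
  set C : Set (Fin k → ℝ) := Set.Icc 0 1 with hC
  have hCvol : volume C = 1 := by rw [hC, Real.volume_Icc_pi]; simp
  have hKc : IsCompact (e '' C) := isCompact_Icc.image hec
  refine ⟨Measure.map e (volume.restrict C), ⟨?_⟩, ⟨e '' C, hKc, ?_⟩, ?_⟩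
  · rw [Measure.map_apply hec.measurable MeasurableSet.univ, Set.preimage_univ,
      Measure.restrict_apply MeasurableSet.univ, Set.univ_inter, hCvol]
  · rw [Measure.map_apply hec.measurable hKc.isClosed.measurableSet.compl,
      Measure.restrict_apply (hec.measurable hKc.isClosed.measurableSet.compl)]
    have : e ⁻¹' (e '' C)ᶜ ∩ C = ∅ := by
      ext c
      simp only [Set.mem_inter_iff, Set.mem_preimage, Set.mem_compl_iff, Set.mem_empty_iff_false,
        iff_false, not_and]
      exact fun h' hc => h' (Set.mem_image_of_mem e hc)
    rw [this, measure_empty]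
  · intro x
    have hT : MeasurableSet ((· + x) '' S) :=
      (Homeomorph.addRight x).measurableEmbedding.measurableSet_image.2 hS
    rw [Measure.map_apply hec.measurable hT, Measure.restrict_apply (hec.measurable hT)]
    exact le_antisymm (le_trans (measure_mono Set.inter_subset_left) (le_of_eq (h x))) (zero_le)
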